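/- Consider a finite-horizon MDP with horizon H and rewards in [0,1], and let π be a memoryless policy. Let δ ≥ 0 and ζ ∈ (0,1]. If for every h ∈ {1,…,H} and every state s, Σ_{a∈A} 1{Δ⋆_h(s,a) ≥ δ}·π_h(a|s) ≤ ζ, then for every h and every state s, v⋆_h(s) − v^π_h(s) ≤ H·δ + ζ·H·(H+1)/2. -/

import Mathlib

open MeasureTheory ProbabilityTheory

/-- Transition-soundness implies soundness: in a finite-horizon MDP with horizon `H` and
rewards in `[0,1]`, if a memoryless policy `π` puts probability at most `ζ` on actions with
action gap at least `δ` at every stage and state, then its suboptimality is at most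
`H·δ + ζ·H·(H+1)/2` at every stage and state. -/
theorem stmt_11 {S : Type*} [MeasurableSpace S] {A : Type*} [Fintype A] [Nonempty A]
    (H : ℕ) (hH : 1 ≤ H)
    (P : A → Kernel S S) (hP : ∀ a, IsMarkovKernel (P a))
    (r : S → A → ℝ) (hrmeas : ∀ a, Measurable fun s => r s a)
    (hr0 : ∀ s a, 0 ≤ r s a) (hr1 : ∀ s a, r s a ≤ 1)
    -- optimal value functions, defined by backward recursion
    (vstar : ℕ → S → ℝ) (qstar : ℕ → S → A → ℝ)
    (hvend : ∀ s, vstar (H + 1) s = 0)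
    (hq : ∀ h, 1 ≤ h → h ≤ H → ∀ s a,
      qstar h s a = r s a + ∫ s', vstar (h + 1) s' ∂(P a s))
    (hv : ∀ h, 1 ≤ h → h ≤ H → ∀ s,
      vstar h s = Finset.univ.sup' Finset.univ_nonempty fun a => qstar h s a)
    -- a memoryless policy and its value functions
    (π : ℕ → S → A → ℝ) (hπmeas : ∀ h a, Measurable fun s => π h s a)
    (hπ0 : ∀ h s a, 0 ≤ π h s a) (hπ1 : ∀ h s, ∑ a, π h s a = 1)
    (vpi : ℕ → S → ℝ)
    (hvpiend : ∀ s, vpi (H + 1) s = 0)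
    (hvpi : ∀ h, 1 ≤ h → h ≤ H → ∀ s,
      vpi h s = ∑ a, π h s a * (r s a + ∫ s', vpi (h + 1) s' ∂(P a s)))
    (δ ζ : ℝ) (hδ : 0 ≤ δ) (hζ0 : 0 < ζ) (hζ1 : ζ ≤ 1)
    -- (δ, ζ)-transition-soundness
    (hsound : ∀ h, 1 ≤ h → h ≤ H → ∀ s,
      ∑ a, (if δ ≤ vstar h s - qstar h s a then π h s a else 0) ≤ ζ) :
    ∀ h, 1 ≤ h → h ≤ H → ∀ s,
      vstar h s - vpi h s ≤ H * δ + ζ * (H * (H + 1) / 2) := by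
  have key : ∀ n : ℕ, ∀ h : ℕ, 1 ≤ h → h + n = H + 1 →
      Measurable (vstar h) ∧ Measurable (vpi h) ∧
      ∀ s, 0 ≤ vstar h s ∧ vstar h s ≤ (n : ℝ) ∧ 0 ≤ vpi h s ∧ vpi h s ≤ (n : ℝ) ∧
        vstar h s - vpi h s ≤ (n : ℝ) * δ + ζ * ((n : ℝ) * ((n : ℝ) + 1) / 2) := by
    intro n
    induction n with
    | zero =>
      intro h h1 hhn
      have hh : h = H + 1 := by omega
      subst hh
      have e1 : vstar (H+1) = fun _ => (0:ℝ) := funext hvend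
      have e2 : vpi (H+1) = fun _ => (0:ℝ) := funext hvpiend
      rw [e1, e2]
      exact ⟨measurable_const, measurable_const, fun s => by norm_num⟩
    | succ n ih =>
      intro h h1 hhn
      have hhH : h ≤ H := by omega
      obtain ⟨mv', mvp', hb'⟩ := ih (h+1) (by omega) (by omega)
      have hv0' : ∀ s, 0 ≤ vstar (h+1) s := fun s => (hb' s).1
      have hv1' : ∀ s, vstar (h+1) s ≤ (n:ℝ) := fun s => (hb' s).2.1
      have hp0' : ∀ s, 0 ≤ vpi (h+1) s := fun s => (hb' s).2.2.1
      have hp1' : ∀ s, vpi (h+1) s ≤ (n:ℝ) := fun s => (hb' s).2.2.2.1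
      have hd' : ∀ s, vstar (h+1) s - vpi (h+1) s ≤ (n:ℝ)*δ + ζ*((n:ℝ)*((n:ℝ)+1)/2) :=
        fun s => (hb' s).2.2.2.2
      haveI : ∀ a, IsMarkovKernel (P a) := hP
      have hn0 : (0:ℝ) ≤ (n:ℝ) := Nat.cast_nonneg n
      have int_vstar : ∀ a s, Integrable (vstar (h+1)) (P a s) := fun a s => by
        refine (integrable_const (n:ℝ)).mono' mv'.aestronglyMeasurable ?_
        filter_upwards with s'
        rw [Real.norm_eq_abs, abs_le]
        exact ⟨by linarith [hv0' s'], hv1' s'⟩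
      have int_vpi : ∀ a s, Integrable (vpi (h+1)) (P a s) := fun a s => by
        refine (integrable_const (n:ℝ)).mono' mvp'.aestronglyMeasurable ?_
        filter_upwards with s'
        rw [Real.norm_eq_abs, abs_le]
        exact ⟨by linarith [hp0' s'], hp1' s'⟩
      have meas_int_star : ∀ a, Measurable fun s => ∫ s', vstar (h+1) s' ∂(P a s) := fun a =>
        (StronglyMeasurable.integral_kernel_prod_right' (κ := P a)
          (f := fun p : S × S => vstar (h+1) p.2)
          (mv'.stronglyMeasurable.comp_measurable measurable_snd)).measurable
      have meas_int_pi : ∀ a, Measurable fun s => ∫ s', vpi (h+1) s' ∂(P a s) := fun a =>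
        (StronglyMeasurable.integral_kernel_prod_right' (κ := P a)
          (f := fun p : S × S => vpi (h+1) p.2)
          (mvp'.stronglyMeasurable.comp_measurable measurable_snd)).measurable
      have int_star_nonneg : ∀ a s, 0 ≤ ∫ s', vstar (h+1) s' ∂(P a s) :=
        fun a s => integral_nonneg hv0'
      have int_pi_nonneg : ∀ a s, 0 ≤ ∫ s', vpi (h+1) s' ∂(P a s) :=
        fun a s => integral_nonneg hp0'
      have int_star_le : ∀ a s, ∫ s', vstar (h+1) s' ∂(P a s) ≤ (n:ℝ) := fun a s => by
        calc ∫ s', vstar (h+1) s' ∂(P a s) ≤ ∫ _, (n:ℝ) ∂(P a s) :=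
              integral_mono (int_vstar a s) (integrable_const _) hv1'
          _ = (n:ℝ) := by simp
      have int_pi_le : ∀ a s, ∫ s', vpi (h+1) s' ∂(P a s) ≤ (n:ℝ) := fun a s => by
        calc ∫ s', vpi (h+1) s' ∂(P a s) ≤ ∫ _, (n:ℝ) ∂(P a s) :=
              integral_mono (int_vpi a s) (integrable_const _) hp1'
          _ = (n:ℝ) := by simp
      have hq0 : ∀ s a, 0 ≤ qstar h s a := fun s a => by
        rw [hq h h1 hhH s a]; have := hr0 s a; have := int_star_nonneg a s; linarith
      have hq1 : ∀ s a, qstar h s a ≤ (n:ℝ) + 1 := fun s a => by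
        rw [hq h h1 hhH s a]; have := hr1 s a; have := int_star_le a s; linarith
      have hvq : ∀ s a, qstar h s a ≤ vstar h s := fun s a => by
        rw [hv h h1 hhH s]; exact Finset.le_sup' _ (Finset.mem_univ a)
      have hvs0 : ∀ s, 0 ≤ vstar h s := fun s =>
        le_trans (hq0 s (Classical.arbitrary A)) (hvq s (Classical.arbitrary A))
      have hvs1 : ∀ s, vstar h s ≤ (n:ℝ) + 1 := fun s => by
        rw [hv h h1 hhH s]; exact Finset.sup'_le _ _ fun a _ => hq1 s a
      have mq : ∀ a, Measurable fun s => qstar h s a := fun a => by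
        have e : (fun s => qstar h s a) = fun s => r s a + ∫ s', vstar (h+1) s' ∂(P a s) :=
          funext fun s => hq h h1 hhH s a
        rw [e]; exact (hrmeas a).add (meas_int_star a)
      have mvh : Measurable (vstar h) := by
        have e : vstar h = Finset.univ.sup' Finset.univ_nonempty (fun a s => qstar h s a) := by
          funext s; rw [hv h h1 hhH s, Finset.sup'_apply]
        rw [e]; exact Finset.measurable_sup' _ fun a _ => mq a
      have mvph : Measurable (vpi h) := by
        have e : vpi h = fun s => ∑ a, π h s a * (r s a + ∫ s', vpi (h+1) s' ∂(P a s)) :=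
          funext (hvpi h h1 hhH)
        rw [e]
        exact Finset.measurable_sum _ fun a _ => (hπmeas h a).mul ((hrmeas a).add (meas_int_pi a))
      have hvp0 : ∀ s, 0 ≤ vpi h s := fun s => by
        rw [hvpi h h1 hhH s]
        refine Finset.sum_nonneg fun a _ => mul_nonneg (hπ0 h s a) ?_
        have := hr0 s a; have := int_pi_nonneg a s; linarith
      have hvp1 : ∀ s, vpi h s ≤ (n:ℝ) + 1 := fun s => by
        rw [hvpi h h1 hhH s]
        calc ∑ a, π h s a * (r s a + ∫ s', vpi (h+1) s' ∂(P a s))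
            ≤ ∑ a, π h s a * ((n:ℝ) + 1) := by
              refine Finset.sum_le_sum fun a _ => mul_le_mul_of_nonneg_left ?_ (hπ0 h s a)
              have := hr1 s a; have := int_pi_le a s; linarith
          _ = (n:ℝ) + 1 := by rw [← Finset.sum_mul, hπ1 h s, one_mul]
      refine ⟨mvh, mvph, fun s => ⟨hvs0 s, by push_cast; exact hvs1 s, hvp0 s,
        by push_cast; exact hvp1 s, ?_⟩⟩
      -- the gap bound
      have diffint : ∀ a, ∫ s', vstar (h+1) s' ∂(P a s) - ∫ s', vpi (h+1) s' ∂(P a s)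
          ≤ (n:ℝ)*δ + ζ*((n:ℝ)*((n:ℝ)+1)/2) := fun a => by
        rw [← integral_sub (int_vstar a s) (int_vpi a s)]
        calc ∫ s', (vstar (h+1) s' - vpi (h+1) s') ∂(P a s)
            ≤ ∫ _, ((n:ℝ)*δ + ζ*((n:ℝ)*((n:ℝ)+1)/2)) ∂(P a s) :=
              integral_mono ((int_vstar a s).sub (int_vpi a s)) (integrable_const _) hd'
          _ = (n:ℝ)*δ + ζ*((n:ℝ)*((n:ℝ)+1)/2) := by simp
      have e : vstar h s - vpi h s = ∑ a, π h s a * ((vstar h s - qstar h s a)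
            + (∫ s', vstar (h+1) s' ∂(P a s) - ∫ s', vpi (h+1) s' ∂(P a s))) := by
        symm
        calc ∑ a, π h s a * ((vstar h s - qstar h s a)
              + (∫ s', vstar (h+1) s' ∂(P a s) - ∫ s', vpi (h+1) s' ∂(P a s)))
            = ∑ a, (π h s a * vstar h s
                - π h s a * (r s a + ∫ s', vpi (h+1) s' ∂(P a s))) := by
              refine Finset.sum_congr rfl fun a _ => ?_
              rw [hq h h1 hhH s a]; ring
          _ = (∑ a, π h s a * vstar h s)
              - ∑ a, π h s a * (r s a + ∫ s', vpi (h+1) s' ∂(P a s)) :=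
              Finset.sum_sub_distrib _ _
          _ = vstar h s - vpi h s := by
              rw [← Finset.sum_mul, hπ1 h s, one_mul, ← hvpi h h1 hhH s]
      rw [e]
      have step : ∀ a, π h s a * ((vstar h s - qstar h s a)
            + (∫ s', vstar (h+1) s' ∂(P a s) - ∫ s', vpi (h+1) s' ∂(P a s)))
          ≤ (if δ ≤ vstar h s - qstar h s a then π h s a else 0) * ((n:ℝ)+1)
            + π h s a * δ + π h s a * ((n:ℝ)*δ + ζ*((n:ℝ)*((n:ℝ)+1)/2)) := by
        intro a
        have hπa := hπ0 h s a
        have hΔ0 : 0 ≤ vstar h s - qstar h s a := by linarith [hvq s a]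
        have hΔ1 : vstar h s - qstar h s a ≤ (n:ℝ)+1 := by
          have := hq0 s a; have := hvs1 s; linarith
        have hD := diffint a
        by_cases hc : δ ≤ vstar h s - qstar h s a
        · simp only [if_pos hc]
          have h2 : π h s a * (vstar h s - qstar h s a) ≤ π h s a * ((n:ℝ)+1) :=
            mul_le_mul_of_nonneg_left hΔ1 hπa
          have h3 : π h s a * (∫ s', vstar (h+1) s' ∂(P a s) - ∫ s', vpi (h+1) s' ∂(P a s))
              ≤ π h s a * ((n:ℝ)*δ + ζ*((n:ℝ)*((n:ℝ)+1)/2)) :=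
            mul_le_mul_of_nonneg_left hD hπa
          nlinarith [mul_nonneg hπa hδ]
        · simp only [if_neg hc, zero_mul]
          push_neg at hc
          have h2 : π h s a * (vstar h s - qstar h s a) ≤ π h s a * δ :=
            mul_le_mul_of_nonneg_left (le_of_lt hc) hπa
          have h3 : π h s a * (∫ s', vstar (h+1) s' ∂(P a s) - ∫ s', vpi (h+1) s' ∂(P a s))
              ≤ π h s a * ((n:ℝ)*δ + ζ*((n:ℝ)*((n:ℝ)+1)/2)) :=
            mul_le_mul_of_nonneg_left hD hπa
          nlinarith
      calc ∑ a, π h s a * ((vstar h s - qstar h s a)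
            + (∫ s', vstar (h+1) s' ∂(P a s) - ∫ s', vpi (h+1) s' ∂(P a s)))
          ≤ ∑ a, ((if δ ≤ vstar h s - qstar h s a then π h s a else 0) * ((n:ℝ)+1)
            + π h s a * δ + π h s a * ((n:ℝ)*δ + ζ*((n:ℝ)*((n:ℝ)+1)/2))) :=
            Finset.sum_le_sum fun a _ => step a
        _ = (∑ a, (if δ ≤ vstar h s - qstar h s a then π h s a else 0)) * ((n:ℝ)+1)
            + δ + ((n:ℝ)*δ + ζ*((n:ℝ)*((n:ℝ)+1)/2)) := by
            rw [Finset.sum_add_distrib, Finset.sum_add_distrib, ← Finset.sum_mul,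
              ← Finset.sum_mul, ← Finset.sum_mul, hπ1 h s, one_mul, one_mul]
        _ ≤ ζ * ((n:ℝ)+1) + δ + ((n:ℝ)*δ + ζ*((n:ℝ)*((n:ℝ)+1)/2)) := by
            have := hsound h h1 hhH s
            have : (∑ a, (if δ ≤ vstar h s - qstar h s a then π h s a else 0)) * ((n:ℝ)+1)
                ≤ ζ * ((n:ℝ)+1) := mul_le_mul_of_nonneg_right this (by linarith)
            linarith
        _ = ((n+1 : ℕ) : ℝ) * δ + ζ * (((n+1:ℕ):ℝ) * (((n+1:ℕ):ℝ) + 1) / 2) := by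
            push_cast; ring
  intro h h1 hH' s
  obtain ⟨_, _, hb⟩ := key (H + 1 - h) h h1 (by omega)
  have hbound := (hb s).2.2.2.2
  have hnH : ((H + 1 - h : ℕ) : ℝ) ≤ (H : ℝ) := by
    exact_mod_cast Nat.le_of_lt_succ (by omega)
  have hn0 : (0:ℝ) ≤ ((H + 1 - h : ℕ) : ℝ) := Nat.cast_nonneg _
  have hζ := le_of_lt hζ0
  calc vstar h s - vpi h s
      ≤ ((H + 1 - h : ℕ) : ℝ) * δ + ζ * (((H + 1 - h : ℕ) : ℝ) * (((H + 1 - h : ℕ) : ℝ) + 1) / 2) :=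
        hbound
    _ ≤ (H : ℝ) * δ + ζ * ((H : ℝ) * ((H : ℝ) + 1) / 2) := by
        have h1' : ((H + 1 - h : ℕ) : ℝ) * δ ≤ (H : ℝ) * δ :=
          mul_le_mul_of_nonneg_right hnH hδ
        have h2' : ((H + 1 - h : ℕ) : ℝ) * (((H + 1 - h : ℕ) : ℝ) + 1) / 2
            ≤ (H : ℝ) * ((H : ℝ) + 1) / 2 := by nlinarith
        nlinarith
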